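/- Under the identifying conditions for both potential outcome means, the average treatment effect E[Y^{a=1} − Y^{a=2} | S=1] equals φ = (γ_{1,1} − γ_{1,0}) − (γ_{0,2} − γ_{0,0}), i.e., a difference-in-differences of conditional outcome means standardized to the index-trial covariate distribution. -/
import Mathlib


open scoped Classical BigOperators
open Finset

noncomputable section

/-- Indicator of a proposition. -/
def ind (P : Prop) : ℝ := if P then 1 else 0

/-- Expectation with respect to weights `p` on a finite outcome space. -/
def pexp {Ω : Type*} [Fintype Ω] (p : Ω → ℝ) (f : Ω → ℝ) : ℝ := ∑ ω, p ω * f ω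

/-- Probability of an event. -/
def prob {Ω : Type*} [Fintype Ω] (p : Ω → ℝ) (B : Ω → Prop) : ℝ :=
  pexp p (fun ω => ind (B ω))

/-- Conditional expectation of `f` given event `B`. -/
def cexp {Ω : Type*} [Fintype Ω] (p : Ω → ℝ) (f : Ω → ℝ) (B : Ω → Prop) : ℝ :=
  pexp p (fun ω => f ω * ind (B ω)) / prob p B

/-- Conditional probability of `B` given `C`. -/
def cprob {Ω : Type*} [Fintype Ω] (p : Ω → ℝ) (B C : Ω → Prop) : ℝ :=
  prob p (fun ω => B ω ∧ C ω) / prob p C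

/-- Conditional outcome mean `g_{s,a}(x) = E[Y | X = x, S = s, A = a]`. -/
def gfun {Ω 𝒳 : Type*} [Fintype Ω] (p : Ω → ℝ) (X : Ω → 𝒳) (S A : Ω → ℕ)
    (Y : Ω → ℝ) (s a : ℕ) (x : 𝒳) : ℝ :=
  cexp p Y (fun ω => X ω = x ∧ S ω = s ∧ A ω = a)

/-- Standardized functional `γ_{s,a} = E[ E[Y | X, S=s, A=a] | S=1 ]`. -/
def gam {Ω 𝒳 : Type*} [Fintype Ω] (p : Ω → ℝ) (X : Ω → 𝒳) (S A : Ω → ℕ)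
    (Y : Ω → ℝ) (s a : ℕ) : ℝ :=
  cexp p (fun ω => gfun p X S A Y s a (X ω)) (fun ω => S ω = 1)

/-- Participation probability `p_s(x) = Pr[S = s | X = x]`. -/
def psel {Ω 𝒳 : Type*} [Fintype Ω] (p : Ω → ℝ) (X : Ω → 𝒳) (S : Ω → ℕ)
    (s : ℕ) (x : 𝒳) : ℝ :=
  cprob p (fun ω => S ω = s) (fun ω => X ω = x)

/-- Treatment probability `e_{s,a}(x) = Pr[A = a | X = x, S = s]`. -/
def etrt {Ω 𝒳 : Type*} [Fintype Ω] (p : Ω → ℝ) (X : Ω → 𝒳) (S A : Ω → ℕ)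
    (s a : ℕ) (x : 𝒳) : ℝ :=
  cprob p (fun ω => A ω = a) (fun ω => X ω = x ∧ S ω = s)

/-- Weight `w_{s,a}(X,S,A) = I(S=s, A=a) p_1(X) / (e_{s,a}(X) p_s(X))`. -/
def wgt {Ω 𝒳 : Type*} [Fintype Ω] (p : Ω → ℝ) (X : Ω → 𝒳) (S A : Ω → ℕ)
    (s a : ℕ) (ω : Ω) : ℝ :=
  ind (S ω = s ∧ A ω = a) * psel p X S 1 (X ω) /
    (etrt p X S A s a (X ω) * psel p X S s (X ω))

/-- Influence function `Γ_{s,a}(O)`. -/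
def Gam {Ω 𝒳 : Type*} [Fintype Ω] (p : Ω → ℝ) (X : Ω → 𝒳) (S A : Ω → ℕ)
    (Y : Ω → ℝ) (s a : ℕ) (ω : Ω) : ℝ :=
  (1 / prob p (fun ω' => S ω' = 1)) *
    (ind (S ω = 1) * (gfun p X S A Y s a (X ω) - gam p X S A Y s a)
      + wgt p X S A s a ω * (Y ω - gfun p X S A Y s a (X ω)))

/-- Variance of `f` under `p`. -/
def pvar {Ω : Type*} [Fintype Ω] (p : Ω → ℝ) (f : Ω → ℝ) : ℝ :=
  pexp p (fun ω => (f ω - pexp p f) ^ 2)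

section Aux

variable {Ω 𝒳 : Type*} [Fintype Ω]

lemma ind_nonneg (P : Prop) : 0 ≤ ind P := by
  unfold ind; split_ifs <;> norm_num

lemma ind_congr {P Q : Prop} (h : P ↔ Q) : ind P = ind Q := by
  unfold ind; split_ifs with h1 h2 <;> tauto

lemma prob_nonneg (p : Ω → ℝ) (hp0 : ∀ ω, 0 ≤ p ω) (B : Ω → Prop) :
    0 ≤ prob p B :=
  Finset.sum_nonneg fun ω _ => mul_nonneg (hp0 ω) (ind_nonneg _)

lemma prob_congr (p : Ω → ℝ) {B C : Ω → Prop} (h : ∀ ω, B ω ↔ C ω) :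
    prob p B = prob p C := by
  unfold prob pexp
  exact Finset.sum_congr rfl fun ω _ => by dsimp only; rw [ind_congr (h ω)]

lemma prob_pos_of_mem (p : Ω → ℝ) (hp0 : ∀ ω, 0 ≤ p ω) (B : Ω → Prop)
    {ω : Ω} (hω : 0 < p ω) (hB : B ω) : 0 < prob p B := by
  have hle : p ω * ind (B ω) ≤ prob p B :=
    Finset.single_le_sum (f := fun ω' => p ω' * ind (B ω'))
      (fun i _ => mul_nonneg (hp0 i) (ind_nonneg _)) (Finset.mem_univ ω)
  have : ind (B ω) = 1 := by unfold ind; simp [hB]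
  rw [this, mul_one] at hle
  exact lt_of_lt_of_le hω hle

lemma cexp_sub (p : Ω → ℝ) (f g : Ω → ℝ) (B : Ω → Prop) :
    cexp p (fun ω => f ω - g ω) B = cexp p f B - cexp p g B := by
  unfold cexp pexp
  rw [← sub_div]
  congr 1
  rw [← Finset.sum_sub_distrib]
  exact Finset.sum_congr rfl fun ω _ => by ring

/-- change the integrand on the event (where `p` is nonzero). -/
lemma cexp_congr (p : Ω → ℝ) {f g : Ω → ℝ} (B : Ω → Prop)
    (h : ∀ ω, p ω ≠ 0 → B ω → f ω = g ω) :
    cexp p f B = cexp p g B := by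
  unfold cexp pexp
  congr 1
  apply Finset.sum_congr rfl
  intro ω _
  dsimp only
  by_cases hp : p ω = 0
  · rw [hp, zero_mul, zero_mul]
  · by_cases hB : B ω
    · rw [h ω hp hB]
    · have : ind (B ω) = 0 := by unfold ind; simp [hB]
      rw [this, mul_zero, mul_zero, mul_zero, mul_zero]

/-- Tower property: conditioning further on `X` inside the event `B`. -/
lemma cexp_tower (p : Ω → ℝ) (hp0 : ∀ ω, 0 ≤ p ω) (X : Ω → 𝒳) (B : Ω → Prop)
    (f : Ω → ℝ) :
    cexp p f B =
      cexp p (fun ω => cexp p f (fun ω' => X ω' = X ω ∧ B ω')) B := by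
  unfold cexp prob pexp
  congr 1
  set h : 𝒳 → ℝ := fun x =>
    (∑ ω, p ω * (f ω * ind (X ω = x ∧ B ω))) /
      ∑ ω, p ω * ind (X ω = x ∧ B ω) with hh
  show (∑ ω, p ω * (f ω * ind (B ω))) = ∑ ω, p ω * (h (X ω) * ind (B ω))
  have hmaps : ∀ ω ∈ (Finset.univ : Finset Ω), X ω ∈ Finset.univ.image X :=
    fun ω _ => Finset.mem_image_of_mem X (Finset.mem_univ ω)
  rw [← Finset.sum_fiberwise_of_maps_to hmaps (fun ω => p ω * (f ω * ind (B ω))),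
      ← Finset.sum_fiberwise_of_maps_to hmaps (fun ω => p ω * (h (X ω) * ind (B ω)))]
  apply Finset.sum_congr rfl
  intro x _
  have hind : ∀ ω, X ω = x → ind (X ω = x ∧ B ω) = ind (B ω) := by
    intro ω hx; exact ind_congr (by tauto)
  have hD : (∑ ω, p ω * ind (X ω = x ∧ B ω)) =
      ∑ ω ∈ Finset.univ.filter (fun ω => X ω = x), p ω * ind (B ω) := by
    rw [Finset.sum_filter]
    apply Finset.sum_congr rfl
    intro ω _
    by_cases hx : X ω = x
    · rw [hind ω hx, if_pos hx]
    · have : ind (X ω = x ∧ B ω) = 0 := by unfold ind; simp [hx]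
      rw [this, mul_zero, if_neg hx]
  have hN : (∑ ω, p ω * (f ω * ind (X ω = x ∧ B ω))) =
      ∑ ω ∈ Finset.univ.filter (fun ω => X ω = x), p ω * (f ω * ind (B ω)) := by
    rw [Finset.sum_filter]
    apply Finset.sum_congr rfl
    intro ω _
    by_cases hx : X ω = x
    · rw [hind ω hx, if_pos hx]
    · have : ind (X ω = x ∧ B ω) = 0 := by unfold ind; simp [hx]
      rw [this, mul_zero, mul_zero, if_neg hx]
  have hstep : ∀ ω ∈ Finset.univ.filter (fun ω => X ω = x),
      p ω * (h (X ω) * ind (B ω)) = h x * (p ω * ind (B ω)) := by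
    intro ω hω
    have hx : X ω = x := (Finset.mem_filter.mp hω).2
    rw [hx]; ring
  rw [Finset.sum_congr rfl hstep, ← Finset.mul_sum, ← hD, ← hN]
  by_cases hDz : (∑ ω, p ω * ind (X ω = x ∧ B ω)) = 0
  · rw [hDz, mul_zero]
    apply Finset.sum_eq_zero
    intro ω _
    have h0 : ∀ ω' ∈ (Finset.univ : Finset Ω),
        0 ≤ p ω' * ind (X ω' = x ∧ B ω') :=
      fun ω' _ => mul_nonneg (hp0 ω') (ind_nonneg _)
    have hz := (Finset.sum_eq_zero_iff_of_nonneg h0).mp hDz ω (Finset.mem_univ ω)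
    rcases mul_eq_zero.mp hz with h | h
    · rw [h, zero_mul]
    · rw [h, mul_zero, mul_zero]
  · rw [hh]
    field_simp

/-- change the integrand using only that it agrees on the event. -/
lemma cexp_congr' (p : Ω → ℝ) {f g : Ω → ℝ} (B : Ω → Prop)
    (h : ∀ ω, B ω → f ω = g ω) : cexp p f B = cexp p g B :=
  cexp_congr p B fun ω _ hB => h ω hB

end Aux

theorem statement3
    {Ω 𝒳 : Type*} [Fintype Ω] (p : Ω → ℝ)
    (hp0 : ∀ ω, 0 ≤ p ω) (hp1 : ∑ ω, p ω = 1)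
    (X : Ω → 𝒳) (S A : Ω → ℕ) (Y : Ω → ℝ) (Ypo : ℕ → Ω → ℝ)
    (hS : 0 < prob p (fun ω => S ω = 1))
    (hcons : ∀ ω a, A ω = a → Ypo a ω = Y ω)
    (hexch1 : ∀ x, ∀ a ∈ ({0, 1} : Set ℕ),
      0 < prob p (fun ω => X ω = x ∧ S ω = 1) →
      cexp p (Ypo a) (fun ω => X ω = x ∧ S ω = 1) =
        cexp p (Ypo a) (fun ω => X ω = x ∧ S ω = 1 ∧ A ω = a))
    (hpos1 : ∀ x, ∀ a ∈ ({0, 1} : Set ℕ),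
      0 < prob p (fun ω => X ω = x ∧ S ω = 1) →
      0 < cprob p (fun ω => A ω = a) (fun ω => X ω = x ∧ S ω = 1))
    (hexch0 : ∀ x, ∀ a ∈ ({0, 2} : Set ℕ),
      0 < prob p (fun ω => X ω = x ∧ S ω = 0) →
      cexp p (Ypo a) (fun ω => X ω = x ∧ S ω = 0) =
        cexp p (Ypo a) (fun ω => X ω = x ∧ S ω = 0 ∧ A ω = a))
    (hpos0 : ∀ x, ∀ a ∈ ({0, 2} : Set ℕ),
      0 < prob p (fun ω => X ω = x ∧ S ω = 0) →
      0 < cprob p (fun ω => A ω = a) (fun ω => X ω = x ∧ S ω = 0))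
    (hA5 : ∀ x, 0 < prob p (fun ω => X ω = x ∧ S ω = 1) →
      0 < cprob p (fun ω => S ω = 0) (fun ω => X ω = x))
    (hA4' : ∀ x, 0 < prob p (fun ω => X ω = x ∧ S ω = 1) →
      cexp p (fun ω => Ypo 2 ω - Ypo 0 ω) (fun ω => X ω = x ∧ S ω = 1) =
        cexp p (fun ω => Ypo 2 ω - Ypo 0 ω) (fun ω => X ω = x ∧ S ω = 0)) :
    cexp p (fun ω => Ypo 1 ω - Ypo 2 ω) (fun ω => S ω = 1) =
      (gam p X S A Y 1 1 - gam p X S A Y 1 0) -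
        (gam p X S A Y 0 2 - gam p X S A Y 0 0) := by
  classical
  -- positivity of the conditioning fiber for ω with p ω ≠ 0 and S ω = 1
  have hfib : ∀ ω : Ω, p ω ≠ 0 → S ω = 1 →
      0 < prob p (fun ω' => X ω' = X ω ∧ S ω' = 1) := by
    intro ω hpω hSω
    exact prob_pos_of_mem p hp0 _ ((hp0 ω).lt_of_ne (Ne.symm hpω)) ⟨rfl, hSω⟩
  -- identification of E[Y^a | S=1] for a ∈ {0,1}
  have key1 : ∀ a, a ∈ ({0, 1} : Set ℕ) →
      cexp p (Ypo a) (fun ω => S ω = 1) = gam p X S A Y 1 a := by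
    intro a ha
    rw [cexp_tower p hp0 X (fun ω => S ω = 1) (Ypo a)]
    unfold gam
    apply cexp_congr p (fun ω => S ω = 1)
    intro ω hpω hSω
    have hpos := hfib ω hpω hSω
    rw [hexch1 (X ω) a ha hpos]
    unfold gfun
    apply cexp_congr' p
    intro ω' hB
    exact hcons ω' a hB.2.2
  -- identification of E[Y^2 - Y^0 | S=1]
  have key2 : cexp p (fun ω => Ypo 2 ω - Ypo 0 ω) (fun ω => S ω = 1) =
      gam p X S A Y 0 2 - gam p X S A Y 0 0 := by
    rw [cexp_tower p hp0 X (fun ω => S ω = 1) (fun ω => Ypo 2 ω - Ypo 0 ω)]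
    unfold gam
    rw [← cexp_sub]
    apply cexp_congr p (fun ω => S ω = 1)
    intro ω hpω hSω
    have hpos := hfib ω hpω hSω
    rw [hA4' (X ω) hpos]
    -- positivity of the external fiber
    have hpos0x : 0 < prob p (fun ω' => X ω' = X ω ∧ S ω' = 0) := by
      have h5 := hA5 (X ω) hpos
      unfold cprob at h5
      by_contra hc
      push_neg at hc
      have hN0 : prob p (fun ω' => S ω' = 0 ∧ X ω' = X ω) = 0 := by
        have heq : prob p (fun ω' => S ω' = 0 ∧ X ω' = X ω) =
            prob p (fun ω' => X ω' = X ω ∧ S ω' = 0) :=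
          prob_congr p fun ω' => and_comm
        have := prob_nonneg p hp0 (fun ω' => X ω' = X ω ∧ S ω' = 0)
        linarith [heq ▸ le_antisymm hc this]
      rw [hN0, zero_div] at h5
      exact lt_irrefl 0 h5
    rw [cexp_sub]
    have e2 : cexp p (Ypo 2) (fun ω' => X ω' = X ω ∧ S ω' = 0) =
        gfun p X S A Y 0 2 (X ω) := by
      rw [hexch0 (X ω) 2 (by simp) hpos0x]
      unfold gfun
      exact cexp_congr' p _ fun ω' hB => hcons ω' 2 hB.2.2
    have e0 : cexp p (Ypo 0) (fun ω' => X ω' = X ω ∧ S ω' = 0) =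
        gfun p X S A Y 0 0 (X ω) := by
      rw [hexch0 (X ω) 0 (by simp) hpos0x]
      unfold gfun
      exact cexp_congr' p _ fun ω' hB => hcons ω' 0 hB.2.2
    rw [e2, e0]
  have h1 := key1 1 (by simp)
  have h0 := key1 0 (by simp)
  rw [cexp_sub] at key2 ⊢
  linarith
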